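/- Matrices in O₂(4) that commute or anticommute with J₁ preserve the metric g_τ: if A ∈ O₂(4) satisfies AJ₁ = J₁A or AJ₁ = −J₁A, then for every τ > 0, every p ∈ ℝ⁴ and all X, Y ∈ ℝ⁴ one has −⟨AX,AY⟩ + (1+τ²)⟨AX,J₁Ap⟩⟨AY,J₁Ap⟩ = −⟨X,Y⟩ + (1+τ²)⟨X,J₁p⟩⟨Y,J₁p⟩. -/
import Mathlib


noncomputable section

/-- The semi-definite inner product of signature (2,2) on ℝ⁴. -/
def ip (v w : Fin 4 → ℝ) : ℝ := v 0 * w 0 + v 1 * w 1 - v 2 * w 2 - v 3 * w 3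

/-- The complex structure J₁ of ℝ⁴. -/
def J1 (v : Fin 4 → ℝ) : Fin 4 → ℝ := ![-v 1, v 0, -v 3, v 2]

/-- The matrix of the complex structure J₁. -/
def J1mat : Matrix (Fin 4) (Fin 4) ℝ := !![0,-1,0,0; 1,0,0,0; 0,0,0,-1; 0,0,1,0]

/-- The matrix ε = diag(1,1,−1,−1), defining the inner product of signature (2,2). -/
def eps : Matrix (Fin 4) (Fin 4) ℝ := !![1,0,0,0; 0,1,0,0; 0,0,-1,0; 0,0,0,-1]

lemma ip_eq (v w : Fin 4 → ℝ) : ip v w = dotProduct v (eps.mulVec w) := by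
  simp [ip, eps, Matrix.mulVec, dotProduct, Fin.sum_univ_four,
    Matrix.vecHead, Matrix.vecTail]
  ring

lemma J1_eq (v : Fin 4 → ℝ) : J1 v = J1mat.mulVec v := by
  funext i
  fin_cases i <;>
    simp [J1, J1mat, Matrix.mulVec, dotProduct, Fin.sum_univ_four]

lemma ip_mulVec (A : Matrix (Fin 4) (Fin 4) ℝ)
    (hA : A.transpose * eps * A = eps) (v w : Fin 4 → ℝ) :
    ip (A.mulVec v) (A.mulVec w) = ip v w := by
  rw [ip_eq, ip_eq, Matrix.mulVec_mulVec, Matrix.dotProduct_mulVec,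
    Matrix.dotProduct_mulVec, ← Matrix.vecMul_transpose, Matrix.vecMul_vecMul,
    ← Matrix.mul_assoc, hA]

theorem indefinite_orthogonal_preserves_gtau (A : Matrix (Fin 4) (Fin 4) ℝ)
    (hA : A.transpose * eps * A = eps)
    (hcomm : A * J1mat = J1mat * A ∨ A * J1mat = -(J1mat * A))
    (τ : ℝ) (hτ : 0 < τ) (p X Y : Fin 4 → ℝ) :
    -ip (A.mulVec X) (A.mulVec Y) +
      (1 + τ ^ 2) * ip (A.mulVec X) (J1 (A.mulVec p)) * ip (A.mulVec Y) (J1 (A.mulVec p)) =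
    -ip X Y + (1 + τ ^ 2) * ip X (J1 p) * ip Y (J1 p) := by
  have key : J1 (A.mulVec p) = A.mulVec (J1 p) ∨ J1 (A.mulVec p) = -(A.mulVec (J1 p)) := by
    rcases hcomm with h | h
    · left
      rw [J1_eq, J1_eq, Matrix.mulVec_mulVec, Matrix.mulVec_mulVec, h]
    · right
      rw [J1_eq, J1_eq, Matrix.mulVec_mulVec, Matrix.mulVec_mulVec, ← Matrix.neg_mulVec, h,
        neg_neg]
  rw [ip_mulVec A hA X Y]
  rcases key with h | h <;> rw [h]
  · rw [ip_mulVec A hA X (J1 p), ip_mulVec A hA Y (J1 p)]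
  · have hneg : ∀ v w : Fin 4 → ℝ, ip v (-w) = -ip v w := by
      intro v w; simp [ip]; ring
    rw [hneg, hneg, ip_mulVec A hA X (J1 p), ip_mulVec A hA Y (J1 p)]; ring
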